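/- For every ξ ∈ ∂F and n ≥ 1, the number of elements of the horosphere H_ξ of word length exactly 2n equals (2r-2)(2r-1)^{n-1}, and the number of elements of H_ξ of word length at most 2n equals (2r-1)^n. -/

import Mathlib

/-- The symmetric generating set of the free group of rank `r`. -/
abbrev Letter (r : ℕ) := Fin r × Bool

/-- The inverse of a letter. -/
def Letter.inv {r : ℕ} (s : Letter r) : Letter r := (s.1, !s.2)

/-- The boundary of the free group of rank `r`. -/
abbrev Boundary (r : ℕ) := {ξ : ℕ → Letter r // ∀ i, ξ (i + 1) ≠ Letter.inv (ξ i)}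

/-- The initial segment `ξ₁⋯ξₖ` of a boundary point, as a word. -/
def prefixList {r : ℕ} (ξ : Boundary r) (k : ℕ) : List (Letter r) :=
  List.ofFn (fun i : Fin k => ξ.1 i)

/-- Membership in the horosphere `H_ξ` through the identity: `g = ξ₁⋯ξₖ t₁⋯tₖ` in reduced
form with `t₁ ≠ ξ_{k+1}`. -/
def InHoro {r : ℕ} (ξ : Boundary r) (g : FreeGroup (Fin r)) : Prop :=
  ∃ k : ℕ, ∃ t : List (Letter r),
    FreeGroup.toWord g = prefixList ξ k ++ t ∧ t.length = k ∧ ∀ a ∈ t.head?, a ≠ ξ.1 k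

namespace Horo

variable {r : ℕ}

/-! ### Reduced words as chains -/

/-- Reducedness of a word as a chain condition. -/
def Red' (w : List (Letter r)) : Prop :=
  List.Chain' (fun a b => b ≠ Letter.inv a) w

lemma inv_eq_iff {a b : Letter r} : b = Letter.inv a ↔ a.1 = b.1 ∧ a.2 = !b.2 := by
  rcases a with ⟨x, c⟩; rcases b with ⟨y, d⟩
  simp only [Letter.inv, Prod.mk.injEq]
  constructor
  · rintro ⟨rfl, rfl⟩; simp
  · rintro ⟨rfl, rfl⟩; simp

lemma reduce_eq_self {w : List (Letter r)} (h : Red' w) : FreeGroup.reduce w = w := by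
  induction w with
  | nil => simp
  | cons x w ih =>
    have hw : FreeGroup.reduce w = w := ih (List.IsChain.tail h)
    rw [FreeGroup.reduce.cons, hw]
    cases w with
    | nil => rfl
    | cons hd tl =>
      have hx : hd ≠ Letter.inv x := (List.isChain_cons_cons.1 h).1
      simp only
      rw [if_neg]
      intro hc
      exact hx (inv_eq_iff.2 hc)

lemma not_chain'_decomp :
    ∀ (l : List (Letter r)), ¬ Red' l →
      ∃ (L2 L3 : List (Letter r)) (x : Fin r) (b : Bool), l = L2 ++ (x, b) :: (x, !b) :: L3
  | [], h => absurd List.isChain_nil h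
  | [a], h => absurd (List.isChain_singleton a) h
  | a :: b :: tl, h => by
    rw [Red', List.Chain', List.isChain_cons_cons] at h
    push_neg at h
    by_cases hab : b = Letter.inv a
    · exact ⟨[], tl, a.1, a.2, by rw [hab]; rfl⟩
    · obtain ⟨L2, L3, x, c, hd⟩ := not_chain'_decomp (b :: tl) (h hab)
      exact ⟨a :: L2, L3, x, c, by rw [List.cons_append, hd]⟩

lemma red'_reduce (w : List (Letter r)) : Red' (FreeGroup.reduce w) := by
  by_contra h
  obtain ⟨L2, L3, x, b, hd⟩ := not_chain'_decomp _ h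
  exact FreeGroup.reduce.not hd

lemma red'_toWord (g : FreeGroup (Fin r)) : Red' (FreeGroup.toWord g) := by
  rw [← FreeGroup.reduce_toWord]; exact red'_reduce _

lemma toWord_mk {w : List (Letter r)} (h : Red' w) : (FreeGroup.mk w).toWord = w := by
  rw [FreeGroup.toWord_mk, reduce_eq_self h]

/-! ### Prefix words -/

@[simp] lemma prefixList_length (ξ : Boundary r) (k : ℕ) : (prefixList ξ k).length = k := by
  simp [prefixList]

lemma prefixList_succ (ξ : Boundary r) (k : ℕ) :
    prefixList ξ (k + 1) = prefixList ξ k ++ [ξ.1 k] := by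
  rw [prefixList, List.ofFn_succ', List.concat_eq_append]
  simp [prefixList]

lemma prefixList_getLast? (ξ : Boundary r) (k : ℕ) :
    (prefixList ξ (k + 1)).getLast? = some (ξ.1 k) := by
  rw [prefixList_succ]
  simp

lemma prefixList_red' (ξ : Boundary r) : ∀ k, Red' (prefixList ξ k)
  | 0 => by simp [prefixList, Red', List.Chain']
  | (k + 1) => by
    rw [Red', List.Chain', prefixList_succ, List.isChain_append]
    refine ⟨prefixList_red' ξ k, List.isChain_singleton _, ?_⟩
    intro x hx y hy
    cases k with
    | zero => simp [prefixList] at hx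
    | succ j =>
      rw [prefixList_getLast? ξ j] at hx
      simp only [Option.mem_def, Option.some_inj] at hx hy
      simp only [List.head?_cons, Option.some_inj] at hy
      subst hx
      subst hy
      exact ξ.2 j

lemma red'_prefix_append (ξ : Boundary r) (k : ℕ) {t : List (Letter r)} (hc : Red' t)
    (hh : ∀ a ∈ t.head?, a ≠ Letter.inv (ξ.1 k)) : Red' (prefixList ξ (k + 1) ++ t) := by
  rw [Red', List.Chain', List.isChain_append]
  refine ⟨prefixList_red' ξ (k + 1), hc, ?_⟩
  intro x hx y hy
  rw [prefixList_getLast? ξ k] at hx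
  obtain rfl : ξ.1 k = x := by simpa using hx
  exact hh y hy

/-! ### Counting reduced words with restricted first letter -/

/-- Reduced words of length `m` whose first letter satisfies `P`. -/
def TailP (r m : ℕ) (P : Letter r → Prop) : Type :=
  {t : List (Letter r) // t.length = m ∧ Red' t ∧ ∀ a ∈ t.head?, P a}

instance tailP_finite (m : ℕ) (P : Letter r → Prop) : Finite (TailP r m P) := by
  haveI := (List.finite_length_eq (Letter r) m).to_subtype
  exact Finite.of_injective
    (fun x => (⟨x.1, x.2.1⟩ : {l : List (Letter r) | l.length = m}))
    (by rintro ⟨a, ha⟩ ⟨b, hb⟩ h; exact Subtype.ext (by simpa [Subtype.ext_iff] using h))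

lemma my_card_sigma {ι : Type*} [Fintype ι] (f : ι → Type*) [∀ i, Finite (f i)] :
    Nat.card (Σ i, f i) = ∑ i, Nat.card (f i) := by
  letI := fun i => Fintype.ofFinite (f i)
  simp [Nat.card_eq_fintype_card, Fintype.card_sigma]

/-- Splitting off the first letter. -/
def consEquiv (m : ℕ) (P : Letter r → Prop) :
    TailP r (m + 1) P ≃ Σ a : {a : Letter r // P a}, TailP r m (fun x => x ≠ Letter.inv a.1) where
  toFun t :=
    match t with
    | ⟨[], h⟩ => absurd h.1 (by simp)
    | ⟨a :: l, h⟩ =>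
      ⟨⟨a, h.2.2 a rfl⟩,
        ⟨l, by simpa using h.1, (List.isChain_cons.1 h.2.1).2,
          fun b hb => (List.isChain_cons.1 h.2.1).1 b hb⟩⟩
  invFun p :=
    ⟨p.1.1 :: p.2.1, by simp [p.2.2.1],
      List.isChain_cons.2 ⟨p.2.2.2.2, p.2.2.2.1⟩,
      fun b hb => by
        simp only [List.head?_cons, Option.mem_def, Option.some_inj] at hb
        exact hb ▸ p.1.2⟩
  left_inv t := by
    rcases t with ⟨_ | ⟨a, l⟩, h⟩
    · exact absurd h.1 (by simp)
    · rfl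
  right_inv p := by
    rcases p with ⟨⟨a, ha⟩, ⟨l, hl⟩⟩
    rfl

lemma card_letter : Fintype.card (Letter r) = 2 * r := by
  simp [mul_comm]

lemma card_ne (c : Letter r) : Fintype.card {a : Letter r // a ≠ c} = 2 * r - 1 := by
  rw [Fintype.card_subtype_compl, card_letter, Fintype.card_subtype_eq]

lemma card_ne2 (c d : Letter r) (h : c ≠ d) :
    Fintype.card {a : Letter r // a ≠ c ∧ a ≠ d} = 2 * r - 2 := by
  rw [Fintype.card_subtype]
  have : Finset.univ.filter (fun a : Letter r => a ≠ c ∧ a ≠ d)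
      = Finset.univ \ {c, d} := by
    ext a; simp [and_comm]
  rw [this, Finset.card_sdiff_of_subset (Finset.subset_univ _), Finset.card_univ, card_letter]
  rw [Finset.card_insert_of_notMem (by simp [h]), Finset.card_singleton]

lemma card_tail1 (m : ℕ) : ∀ c : Letter r,
    Nat.card (TailP r m (fun x => x ≠ c)) = (2 * r - 1) ^ m := by
  induction m with
  | zero =>
    intro c
    have : Unique (TailP r 0 (fun x => x ≠ c)) := by
      refine ⟨⟨⟨[], rfl, List.isChain_nil, by simp⟩⟩, ?_⟩
      rintro ⟨l, hl, -⟩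
      exact Subtype.ext (List.length_eq_zero_iff.1 hl)
    rw [pow_zero]
    exact Nat.card_unique
  | succ m ih =>
    intro c
    rw [Nat.card_congr (consEquiv m (fun x => x ≠ c)), my_card_sigma]
    simp only [ih]
    rw [Finset.sum_const, Finset.card_univ, card_ne, smul_eq_mul, pow_succ]
    ring

lemma card_tail2 (m : ℕ) (c d : Letter r) (h : c ≠ d) :
    Nat.card (TailP r (m + 1) (fun x => x ≠ c ∧ x ≠ d)) = (2 * r - 2) * (2 * r - 1) ^ m := by
  rw [Nat.card_congr (consEquiv m (fun x => x ≠ c ∧ x ≠ d)), my_card_sigma]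
  simp only [card_tail1]
  rw [Finset.sum_const, Finset.card_univ, card_ne2 c d h, smul_eq_mul]

/-! ### The sphere of the horosphere -/

lemma inHoro_one (ξ : Boundary r) : InHoro ξ (1 : FreeGroup (Fin r)) :=
  ⟨0, [], by simp [prefixList, FreeGroup.toWord_one], rfl, by simp⟩

/-- The sphere of radius `2(k+1)` in the horosphere, identified with tails. -/
def sphereEquiv (ξ : Boundary r) (k : ℕ) :
    {g : FreeGroup (Fin r) // InHoro ξ g ∧ (FreeGroup.toWord g).length = 2 * (k + 1)} ≃
      TailP r (k + 1) (fun a => a ≠ ξ.1 (k + 1) ∧ a ≠ Letter.inv (ξ.1 k)) where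
  toFun g := by
    refine ⟨(FreeGroup.toWord g.1).drop (k + 1), ?_⟩
    obtain ⟨⟨k₀, t, hw, hl, hh⟩, hlen⟩ := g.2
    have hk : k₀ = k + 1 := by
      have := congrArg List.length hw
      simp only [List.length_append, prefixList_length, hl] at this
      omega
    subst hk
    have hdrop : (FreeGroup.toWord g.1).drop (k + 1) = t := by
      rw [hw]
      simpa only [prefixList_length] using List.drop_left (l₁ := prefixList ξ (k + 1)) (l₂ := t)
    rw [hdrop]
    have hred : Red' (prefixList ξ (k + 1) ++ t) := hw ▸ red'_toWord g.1
    rw [Red', List.Chain', List.isChain_append] at hred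
    refine ⟨hl, hred.2.1, ?_⟩
    intro a ha
    refine ⟨hh a ha, ?_⟩
    have := hred.2.2 (ξ.1 k) (by rw [prefixList_getLast?]; rfl) a ha
    exact this
  invFun t := by
    refine ⟨FreeGroup.mk (prefixList ξ (k + 1) ++ t.1), ?_⟩
    obtain ⟨t, hl, hc, hh⟩ := t
    have hred : Red' (prefixList ξ (k + 1) ++ t) :=
      red'_prefix_append ξ k hc (fun a ha => (hh a ha).2)
    have hw : (FreeGroup.mk (prefixList ξ (k + 1) ++ t)).toWord
        = prefixList ξ (k + 1) ++ t := toWord_mk hred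
    refine ⟨⟨k + 1, t, hw, hl, fun a ha => (hh a ha).1⟩, ?_⟩
    rw [hw]
    simp only [List.length_append, prefixList_length, hl]
    omega
  left_inv g := by
    obtain ⟨⟨k₀, t, hw, hl, hh⟩, hlen⟩ := g.2
    have hk : k₀ = k + 1 := by
      have := congrArg List.length hw
      simp only [List.length_append, prefixList_length, hl] at this
      omega
    subst hk
    have hdrop : (FreeGroup.toWord g.1).drop (k + 1) = t := by
      rw [hw]
      simpa only [prefixList_length] using List.drop_left (l₁ := prefixList ξ (k + 1)) (l₂ := t)
    apply Subtype.ext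
    show FreeGroup.mk (prefixList ξ (k + 1) ++ (FreeGroup.toWord g.1).drop (k + 1)) = g.1
    rw [hdrop, ← hw, FreeGroup.mk_toWord]
  right_inv t := by
    apply Subtype.ext
    obtain ⟨t, hl, hc, hh⟩ := t
    have hred : Red' (prefixList ξ (k + 1) ++ t) :=
      red'_prefix_append ξ k hc (fun a ha => (hh a ha).2)
    show (FreeGroup.toWord (FreeGroup.mk (prefixList ξ (k + 1) ++ t))).drop (k + 1) = t
    rw [toWord_mk hred]
    simpa only [prefixList_length] using List.drop_left (l₁ := prefixList ξ (k + 1)) (l₂ := t)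

lemma card_sphere (ξ : Boundary r) (k : ℕ) :
    Nat.card {g : FreeGroup (Fin r) // InHoro ξ g ∧ (FreeGroup.toWord g).length = 2 * (k + 1)}
      = (2 * r - 2) * (2 * r - 1) ^ k := by
  rw [Nat.card_congr (sphereEquiv ξ k)]
  exact card_tail2 k _ _ (ξ.2 k)

/-! ### The ball of the horosphere -/

instance ball_finite (ξ : Boundary r) (n : ℕ) :
    Finite {g : FreeGroup (Fin r) // InHoro ξ g ∧ (FreeGroup.toWord g).length ≤ n} := by
  haveI := (List.finite_length_le (Letter r) n).to_subtype
  exact Finite.of_injective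
    (fun g => (⟨FreeGroup.toWord g.1, g.2.2⟩ : {l : List (Letter r) | l.length ≤ n}))
    (by
      rintro ⟨a, ha⟩ ⟨b, hb⟩ h
      exact Subtype.ext (FreeGroup.toWord_injective (by simpa [Subtype.ext_iff] using h)))

instance sphere_finite (ξ : Boundary r) (n : ℕ) :
    Finite {g : FreeGroup (Fin r) // InHoro ξ g ∧ (FreeGroup.toWord g).length = n} := by
  haveI := (List.finite_length_eq (Letter r) n).to_subtype
  exact Finite.of_injective
    (fun g => (⟨FreeGroup.toWord g.1, g.2.2⟩ : {l : List (Letter r) | l.length = n}))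
    (by
      rintro ⟨a, ha⟩ ⟨b, hb⟩ h
      exact Subtype.ext (FreeGroup.toWord_injective (by simpa [Subtype.ext_iff] using h)))

/-- Splitting the ball of radius `2(n+1)` into the ball of radius `2n` and the sphere. -/
def ballSplit (ξ : Boundary r) (n : ℕ) :
    {g : FreeGroup (Fin r) // InHoro ξ g ∧ (FreeGroup.toWord g).length ≤ 2 * (n + 1)} ≃
      {g : FreeGroup (Fin r) // InHoro ξ g ∧ (FreeGroup.toWord g).length ≤ 2 * n} ⊕
      {g : FreeGroup (Fin r) // InHoro ξ g ∧ (FreeGroup.toWord g).length = 2 * (n + 1)} where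
  toFun g :=
    if h : (FreeGroup.toWord g.1).length ≤ 2 * n then Sum.inl ⟨g.1, g.2.1, h⟩
    else Sum.inr ⟨g.1, g.2.1, by
      obtain ⟨k₀, t, hw, hl, -⟩ := g.2.1
      have heven : (FreeGroup.toWord g.1).length = k₀ + k₀ := by
        rw [hw]; simp [hl]
      have h2 := g.2.2
      omega⟩
  invFun := Sum.elim
    (fun g => ⟨g.1, g.2.1, by have := g.2.2; omega⟩)
    (fun g => ⟨g.1, g.2.1, le_of_eq g.2.2⟩)
  left_inv g := by
    dsimp only
    split_ifs with h <;> rfl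
  right_inv g := by
    rcases g with ⟨g, hg, h⟩ | ⟨g, hg, h⟩
    · dsimp only [Sum.elim_inl]
      rw [dif_pos h]
    · dsimp only [Sum.elim_inr]
      rw [dif_neg (by omega)]

lemma card_ball (hr : 1 ≤ r) (ξ : Boundary r) : ∀ n : ℕ,
    Nat.card {g : FreeGroup (Fin r) // InHoro ξ g ∧ (FreeGroup.toWord g).length ≤ 2 * n}
      = (2 * r - 1) ^ n := by
  intro n
  induction n with
  | zero =>
    have : Unique {g : FreeGroup (Fin r) // InHoro ξ g ∧ (FreeGroup.toWord g).length ≤ 2 * 0} := by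
      refine ⟨⟨⟨1, inHoro_one ξ, by simp [FreeGroup.toWord_one]⟩⟩, ?_⟩
      rintro ⟨g, -, hg⟩
      apply Subtype.ext
      show g = 1
      rw [← FreeGroup.toWord_eq_nil_iff, ← List.length_eq_zero_iff]
      omega
    rw [pow_zero]
    exact Nat.card_unique
  | succ n ih =>
    rw [Nat.card_congr (ballSplit ξ n), Nat.card_sum, ih, card_sphere ξ n]
    have h1 : 2 * r - 1 = (2 * r - 2) + 1 := by omega
    rw [h1, pow_succ]
    ring

end Horo

/-- For every `ξ ∈ ∂F` and `n ≥ 1`, the number of elements of the horosphere `H_ξ` of word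
length exactly `2n` equals `(2r-2)(2r-1)^{n-1}`, and the number of elements of `H_ξ` of word
length at most `2n` equals `(2r-1)^n`. -/
theorem card_horosphere_sphere_ball (r n : ℕ) (hr : 2 ≤ r) (hn : 1 ≤ n) (ξ : Boundary r) :
    Nat.card {g : FreeGroup (Fin r) // InHoro ξ g ∧ (FreeGroup.toWord g).length = 2 * n} =
        (2 * r - 2) * (2 * r - 1) ^ (n - 1) ∧
    Nat.card {g : FreeGroup (Fin r) // InHoro ξ g ∧ (FreeGroup.toWord g).length ≤ 2 * n} =
        (2 * r - 1) ^ n := by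
  obtain ⟨m, rfl⟩ : ∃ m, n = m + 1 := ⟨n - 1, by omega⟩
  refine ⟨?_, Horo.card_ball (by omega) ξ (m + 1)⟩
  simpa using Horo.card_sphere ξ m
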